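/- Let A₁, A₂ be bounded self-adjoint Jacobi matrices on ℓ²(ℕ₀) with entries a_{j,k} > 0 (off-diagonal) and b_{j,k} ∈ ℝ (diagonal), and m_j(z) = ⟨δ₀, (A_j − z)^{−1} δ₀⟩. If |m₁(z) − m₂(z)| = O(|z|^{−N}) as |z| → ∞ for some even N ≥ 4, then a_{1,k} = a_{2,k} and b_{1,k} = b_{2,k} for 0 ≤ k ≤ (N−4)/2. -/

import Mathlib

open MeasureTheory

noncomputable section

namespace JacobiBM
open Finset

/-- Action of the Jacobi matrix with parameters `a`, `b` on real sequences. -/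
def J (a b : ℕ → ℝ) (u : ℕ → ℝ) (k : ℕ) : ℝ :=
  (if k = 0 then 0 else a (k-1) * u (k-1)) + b k * u k + a k * u (k+1)

/-- `q a b m = Jᵐ δ₀` as a real sequence. -/
def q (a b : ℕ → ℝ) : ℕ → ℕ → ℝ
  | 0 => fun k => if k = 0 then 1 else 0
  | m+1 => J a b (q a b m)

lemma qsupp (a b : ℕ → ℝ) : ∀ m k, m < k → q a b m k = 0 := by
  intro m
  induction m with
  | zero =>
      intro k hk
      have : k ≠ 0 := by omega
      simp [q, this]
  | succ m ih =>
      intro k hk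
      have h1 : m < k - 1 := by omega
      have h2 : m < k := by omega
      have h3 : m < k + 1 := by omega
      have hk0 : k ≠ 0 := by omega
      simp [q, J, hk0, ih _ h1, ih _ h2, ih _ h3]

lemma qtop (a b : ℕ → ℝ) : ∀ m, q a b m m = ∏ i ∈ range m, a i := by
  intro m
  induction m with
  | zero => simp [q]
  | succ m ih =>
      have h1 : q a b m (m+1) = 0 := qsupp a b m (m+1) (by omega)
      have h2 : q a b m (m+2) = 0 := qsupp a b m (m+2) (by omega)
      simp [q, J, h1, h2, ih, prod_range_succ]
      ring

lemma qeq (a₁ b₁ a₂ b₂ : ℕ → ℝ) :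
    ∀ m, (∀ i < m, a₁ i = a₂ i) → (∀ i < m, b₁ i = b₂ i) →
      ∀ k, q a₁ b₁ m k = q a₂ b₂ m k := by
  intro m
  induction m with
  | zero => intro _ _ k; rfl
  | succ m ih =>
      intro ha hb k
      have ih' : ∀ k, q a₁ b₁ m k = q a₂ b₂ m k :=
        ih (fun i hi => ha i (by omega)) (fun i hi => hb i (by omega))
      rcases Nat.lt_or_ge k (m+2) with hk | hk
      · have e1 : (if k = 0 then (0:ℝ) else a₁ (k-1) * q a₁ b₁ m (k-1))
            = (if k = 0 then 0 else a₂ (k-1) * q a₂ b₂ m (k-1)) := by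
          by_cases h0 : k = 0
          · simp [h0]
          · rw [if_neg h0, if_neg h0, ih' (k-1), ha (k-1) (by omega)]
        have e2 : b₁ k * q a₁ b₁ m k = b₂ k * q a₂ b₂ m k := by
          rcases Nat.lt_or_ge k (m+1) with h | h
          · rw [ih' k, hb k h]
          · rw [qsupp a₁ b₁ m k (by omega), qsupp a₂ b₂ m k (by omega), mul_zero, mul_zero]
        have e3 : a₁ k * q a₁ b₁ m (k+1) = a₂ k * q a₂ b₂ m (k+1) := by
          rcases Nat.lt_or_ge k (m+1) with h | h
          · rw [ih' (k+1), ha k h]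
          · rw [qsupp a₁ b₁ m (k+1) (by omega), qsupp a₂ b₂ m (k+1) (by omega),
              mul_zero, mul_zero]
        show J a₁ b₁ (q a₁ b₁ m) k = J a₂ b₂ (q a₂ b₂ m) k
        simp only [J]
        rw [e1, e2, e3]
      · rw [qsupp a₁ b₁ (m+1) k (by omega), qsupp a₂ b₂ (m+1) k (by omega)]

/-- Expansion of `∑ (J u) k * v k` over a range covering the supports. -/
lemma sum_J_mul (a b u v : ℕ → ℝ) (K : ℕ) (hv : v K = 0) :
    ∑ k ∈ range (K+1), J a b u k * v k
      = (∑ k ∈ range K, a k * u k * v (k+1)) + (∑ k ∈ range (K+1), b k * u k * v k)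
        + ∑ k ∈ range K, a k * u (k+1) * v k := by
  have h : ∀ k ∈ range (K+1), J a b u k * v k
      = (if k = 0 then 0 else a (k-1) * u (k-1)) * v k + b k * u k * v k
        + a k * u (k+1) * v k := by
    intro k _; simp only [J, add_mul]
  rw [sum_congr rfl h, sum_add_distrib, sum_add_distrib]
  congr 1
  · congr 1
    rw [Finset.sum_range_succ']
    simp
  · rw [Finset.sum_range_succ, hv]
    simp

/-- Symmetry of the Jacobi form. -/
lemma sym (a b u v : ℕ → ℝ) (K : ℕ) (hu : u K = 0) (hv : v K = 0) :
    ∑ k ∈ range (K+1), J a b u k * v k = ∑ k ∈ range (K+1), u k * J a b v k := by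
  have h2 : ∑ k ∈ range (K+1), u k * J a b v k
      = ∑ k ∈ range (K+1), J a b v k * u k := by
    exact sum_congr rfl fun k _ => mul_comm _ _
  rw [sum_J_mul a b u v K hv, h2, sum_J_mul a b v u K hu]
  have h3 : ∑ k ∈ range K, a k * u k * v (k+1) = ∑ k ∈ range K, a k * v (k+1) * u k := by
    exact sum_congr rfl fun k _ => by ring
  have h4 : ∑ k ∈ range K, a k * u (k+1) * v k = ∑ k ∈ range K, a k * v k * u (k+1) := by
    exact sum_congr rfl fun k _ => by ring
  have h5 : ∑ k ∈ range (K+1), b k * u k * v k = ∑ k ∈ range (K+1), b k * v k * u k := by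
    exact sum_congr rfl fun k _ => by ring
  rw [h3, h4, h5]
  ring

lemma shift (a b : ℕ → ℝ) (C : ℕ) :
    ∀ i j, i + j ≤ C → q a b (i+j) 0 = ∑ k ∈ range (C+1), q a b i k * q a b j k := by
  intro i
  induction i with
  | zero =>
      intro j hj
      have : ∀ k ∈ range (C+1), q a b 0 k * q a b j k
          = if k = 0 then q a b j k else 0 := by
        intro k _
        by_cases h : k = 0 <;> simp [q, h]
      rw [Finset.sum_congr rfl this]
      simp [Finset.sum_ite_eq' (range (C+1)) 0 (fun k => q a b j k)]
  | succ i ih =>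
      intro j hj
      have h1 : (i+1) + j = i + (j+1) := by omega
      rw [h1, ih (j+1) (by omega)]
      have hqj : q a b j C = 0 := qsupp a b j C (by omega)
      have hqi : q a b i C = 0 := qsupp a b i C (by omega)
      have := sym a b (q a b i) (q a b j) C hqi hqj
      calc ∑ k ∈ range (C+1), q a b i k * q a b (j+1) k
          = ∑ k ∈ range (C+1), q a b i k * J a b (q a b j) k := rfl
        _ = ∑ k ∈ range (C+1), J a b (q a b i) k * q a b j k := this.symm
        _ = ∑ k ∈ range (C+1), q a b (i+1) k * q a b j k := rfl

end JacobiBM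

namespace JacobiBM
open Finset

lemma extract_step (a₁ b₁ a₂ b₂ : ℕ → ℝ) (ha₁ : ∀ k, 0 < a₁ k) (ha₂ : ∀ k, 0 < a₂ k)
    (K : ℕ) (hprev : ∀ i < K, a₁ i = a₂ i ∧ b₁ i = b₂ i)
    (hmom : ∀ n ≤ 2*K+2, q a₁ b₁ n 0 = q a₂ b₂ n 0) :
    a₁ K = a₂ K ∧ b₁ K = b₂ K := by
  have hqe : ∀ k, q a₁ b₁ K k = q a₂ b₂ K k :=
    qeq _ _ _ _ K (fun i hi => (hprev i hi).1) (fun i hi => (hprev i hi).2)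
  set P := q a₂ b₂ K K with hPdef
  have hP : q a₁ b₁ K K = P := hqe K
  have hPpos : 0 < P := by
    rw [hPdef, qtop]; exact Finset.prod_pos (fun i _ => ha₂ i)
  have hmid : ∀ k < K, q a₁ b₁ (K+1) k = q a₂ b₂ (K+1) k := by
    intro k hk
    show J a₁ b₁ (q a₁ b₁ K) k = J a₂ b₂ (q a₂ b₂ K) k
    simp only [J, hqe]
    rw [(hprev k hk).1, (hprev k hk).2]
    by_cases h0 : k = 0
    · simp [h0]
    · rw [if_neg h0, if_neg h0, (hprev (k-1) (by omega)).1]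
  have htopb : ∀ (a b : ℕ → ℝ), q a b (K+1) K
      = (if K = 0 then 0 else a (K-1) * q a b K (K-1)) + b K * q a b K K := by
    intro a b
    show J a b (q a b K) K = _
    simp [J, qsupp a b K (K+1) (by omega)]
  have hcommon : (if K = 0 then (0:ℝ) else a₁ (K-1) * q a₁ b₁ K (K-1))
      = (if K = 0 then 0 else a₂ (K-1) * q a₂ b₂ K (K-1)) := by
    by_cases h0 : K = 0
    · simp [h0]
    · rw [if_neg h0, if_neg h0, (hprev (K-1) (by omega)).1, hqe (K-1)]
  have hred : ∀ (a b : ℕ → ℝ) (M : ℕ), K + 1 ≤ M →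
      ∑ k ∈ range M, q a b (K+1) k * q a b K k
        = ∑ k ∈ range (K+1), q a b (K+1) k * q a b K k := by
    intro a b M hM
    refine (Finset.sum_subset (Finset.range_subset_range.mpr hM) ?_).symm
    intro x hx hnx
    have : K < x := by
      simp only [Finset.mem_range] at hnx; omega
    rw [qsupp a b K x this, mul_zero]
  -- the odd moment determines b K
  have hs₁ : q a₁ b₁ (2*K+1) 0 = ∑ k ∈ range (K+1), q a₁ b₁ (K+1) k * q a₁ b₁ K k := by
    have h := shift a₁ b₁ (2*K+1) (K+1) K (by omega)
    have e : (K+1) + K = 2*K+1 := by omega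
    rw [e] at h
    rw [h, hred a₁ b₁ (2*K+1+1) (by omega)]
  have hs₂ : q a₂ b₂ (2*K+1) 0 = ∑ k ∈ range (K+1), q a₂ b₂ (K+1) k * q a₂ b₂ K k := by
    have h := shift a₂ b₂ (2*K+1) (K+1) K (by omega)
    have e : (K+1) + K = 2*K+1 := by omega
    rw [e] at h
    rw [h, hred a₂ b₂ (2*K+1+1) (by omega)]
  have hb0 := hmom (2*K+1) (by omega)
  rw [hs₁, hs₂, Finset.sum_range_succ, Finset.sum_range_succ] at hb0
  have hsum_eq : ∑ k ∈ range K, q a₁ b₁ (K+1) k * q a₁ b₁ K k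
      = ∑ k ∈ range K, q a₂ b₂ (K+1) k * q a₂ b₂ K k := by
    refine Finset.sum_congr rfl fun k hk => ?_
    have hkK : k < K := Finset.mem_range.mp hk
    rw [hmid k hkK, hqe k]
  rw [hsum_eq, htopb a₁ b₁, htopb a₂ b₂, hP, hcommon] at hb0
  have hbK : b₁ K = b₂ K := by
    have h2 : b₁ K * (P * P) = b₂ K * (P * P) := by ring_nf; ring_nf at hb0; linarith
    exact mul_right_cancel₀ (by positivity) h2
  refine ⟨?_, hbK⟩
  -- now the even moment determines a K
  have hmid' : ∀ k ≤ K, q a₁ b₁ (K+1) k = q a₂ b₂ (K+1) k := by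
    intro k hk
    rcases Nat.lt_or_ge k K with h | h
    · exact hmid k h
    · have : k = K := by omega
      subst this
      rw [htopb a₁ b₁, htopb a₂ b₂, hP, hcommon, hbK]
  have hredsq : ∀ (a b : ℕ → ℝ) (M : ℕ), K + 2 ≤ M →
      ∑ k ∈ range M, q a b (K+1) k * q a b (K+1) k
        = ∑ k ∈ range (K+2), q a b (K+1) k * q a b (K+1) k := by
    intro a b M hM
    refine (Finset.sum_subset (Finset.range_subset_range.mpr hM) ?_).symm
    intro x hx hnx
    have : K + 1 < x := by
      simp only [Finset.mem_range] at hnx; omega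
    rw [qsupp a b (K+1) x this, mul_zero]
  have hs₁' : q a₁ b₁ (2*K+2) 0
      = ∑ k ∈ range (K+2), q a₁ b₁ (K+1) k * q a₁ b₁ (K+1) k := by
    have h := shift a₁ b₁ (2*K+2) (K+1) (K+1) (by omega)
    have e : (K+1) + (K+1) = 2*K+2 := by omega
    rw [e] at h
    rw [h, hredsq a₁ b₁ (2*K+2+1) (by omega)]
  have hs₂' : q a₂ b₂ (2*K+2) 0
      = ∑ k ∈ range (K+2), q a₂ b₂ (K+1) k * q a₂ b₂ (K+1) k := by
    have h := shift a₂ b₂ (2*K+2) (K+1) (K+1) (by omega)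
    have e : (K+1) + (K+1) = 2*K+2 := by omega
    rw [e] at h
    rw [h, hredsq a₂ b₂ (2*K+2+1) (by omega)]
  have ha0 := hmom (2*K+2) (by omega)
  rw [hs₁', hs₂',
    Finset.sum_range_succ (fun k => q a₁ b₁ (K+1) k * q a₁ b₁ (K+1) k) (K+1),
    Finset.sum_range_succ (fun k => q a₂ b₂ (K+1) k * q a₂ b₂ (K+1) k) (K+1)] at ha0
  have hsum_eq' : ∑ k ∈ range (K+1), q a₁ b₁ (K+1) k * q a₁ b₁ (K+1) k
      = ∑ k ∈ range (K+1), q a₂ b₂ (K+1) k * q a₂ b₂ (K+1) k := by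
    refine Finset.sum_congr rfl fun k hk => ?_
    have hkK : k ≤ K := by
      have := Finset.mem_range.mp hk; omega
    rw [hmid' k hkK]
  have htop1 : q a₁ b₁ (K+1) (K+1) = a₁ K * P := by
    rw [qtop, Finset.prod_range_succ, mul_comm]
    congr 1
    rw [hPdef, qtop]
    exact Finset.prod_congr rfl fun i hi => (hprev i (Finset.mem_range.mp hi)).1
  have htop2 : q a₂ b₂ (K+1) (K+1) = a₂ K * P := by
    rw [qtop, Finset.prod_range_succ, mul_comm, hPdef, qtop]
  rw [hsum_eq', htop1, htop2] at ha0
  have hsq : a₁ K * P = a₂ K * P := by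
    have h1 : 0 < a₁ K * P := mul_pos (ha₁ K) hPpos
    have h2 : 0 < a₂ K * P := mul_pos (ha₂ K) hPpos
    nlinarith [h1, h2, ha0]
  exact mul_right_cancel₀ (ne_of_gt hPpos) hsq

lemma extract (a₁ b₁ a₂ b₂ : ℕ → ℝ) (ha₁ : ∀ k, 0 < a₁ k) (ha₂ : ∀ k, 0 < a₂ k) :
    ∀ K, (∀ n ≤ 2*K+2, q a₁ b₁ n 0 = q a₂ b₂ n 0) →
      ∀ k ≤ K, a₁ k = a₂ k ∧ b₁ k = b₂ k := by
  intro K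
  induction K with
  | zero =>
      intro hmom k hk
      have : k = 0 := by omega
      subst this
      exact extract_step a₁ b₁ a₂ b₂ ha₁ ha₂ 0 (by omega) hmom
  | succ K ih =>
      intro hmom k hk
      rcases Nat.lt_or_ge k (K+1) with h | h
      · exact ih (fun n hn => hmom n (by omega)) k (by omega)
      · have : k = K + 1 := by omega
        subst this
        refine extract_step a₁ b₁ a₂ b₂ ha₁ ha₂ (K+1)
          (fun i hi => ih (fun n hn => hmom n (by omega)) i (by omega)) ?_
        intro n hn
        exact hmom n (by omega)

end JacobiBM

namespace JacobiBM

abbrev H := lp (fun _ : ℕ => ℂ) 2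

lemma res_identity (A R : H →L[ℂ] H) (z : ℂ) (hz : z ≠ 0)
    (hR : (A - z • 1) * R = 1) (w : H) :
    R w = z⁻¹ • (A (R w) - w) := by
  have h := congrArg (fun T : H →L[ℂ] H => T w) hR
  simp only [ContinuousLinearMap.mul_apply, ContinuousLinearMap.sub_apply,
    ContinuousLinearMap.smul_apply, ContinuousLinearMap.one_apply] at h
  set y := R w with hy
  rw [eq_comm, inv_smul_eq_iff₀ hz, ← h]
  abel

lemma res_norm (A R : H →L[ℂ] H) (z : ℂ)
    (hR : (A - z • 1) * R = 1) : ‖z‖ * ‖R‖ ≤ ‖A‖ * ‖R‖ + 1 := by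
  have h : A * R - z • R = 1 := by
    rw [← hR]; rw [sub_mul, smul_mul_assoc, one_mul]
  have h2 : z • R = A * R - 1 := by rw [← h]; abel
  have h3 : ‖z • R‖ = ‖z‖ * ‖R‖ := norm_smul z R
  have h4 : ‖A * R - 1‖ ≤ ‖A‖ * ‖R‖ + 1 := by
    refine (norm_sub_le _ _).trans ?_
    have h5 : ‖A * R‖ ≤ ‖A‖ * ‖R‖ := norm_mul_le A R
    have h6 : ‖(1 : H →L[ℂ] H)‖ ≤ 1 := by
      rw [ContinuousLinearMap.one_def]; exact ContinuousLinearMap.norm_id_le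
    linarith
  rw [← h3, h2]; exact h4

lemma pow_apply_norm (A : H →L[ℂ] H) (v : H) : ∀ M : ℕ, ‖(A^M) v‖ ≤ ‖A‖^M * ‖v‖ := by
  intro M
  induction M with
  | zero =>
      rw [pow_zero, pow_zero, ContinuousLinearMap.one_apply, one_mul]
  | succ M ih =>
      rw [pow_succ', ContinuousLinearMap.mul_apply]
      calc ‖A ((A^M) v)‖ ≤ ‖A‖ * ‖(A^M) v‖ := A.le_opNorm _
        _ ≤ ‖A‖ * (‖A‖^M * ‖v‖) :=
            mul_le_mul_of_nonneg_left ih (norm_nonneg A)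
        _ = ‖A‖^(M+1) * ‖v‖ := by ring

lemma expand_coord (A R : H →L[ℂ] H) (z : ℂ) (hz : z ≠ 0)
    (hR : (A - z • 1) * R = 1) (w : H) :
    ∀ M : ℕ, (R w : ∀ _ : ℕ, ℂ) 0
      = (∑ n ∈ Finset.range M, -(z⁻¹^(n+1)) * (((A^n) w : ∀ _ : ℕ, ℂ) 0))
        + z⁻¹^M * (((A^M) (R w) : ∀ _ : ℕ, ℂ) 0) := by
  intro M
  induction M with
  | zero => simp
  | succ M ih =>
      rw [ih, Finset.sum_range_succ]
      have hv : (A^M) (R w) = z⁻¹ • ((A^(M+1)) (R w) - (A^M) w) := by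
        conv_lhs => rw [res_identity A R z hz hR w]
        have hps : (A^(M+1)) (R w) = (A^M) (A (R w)) := by
          rw [pow_succ, ContinuousLinearMap.mul_apply]
        rw [_root_.map_smul, _root_.map_sub, hps]
      rw [hv]
      have hcoord : ((z⁻¹ • ((A^(M+1)) (R w) - (A^M) w) : H) : ∀ _ : ℕ, ℂ) 0
          = z⁻¹ * ((((A^(M+1)) (R w) : ∀ _ : ℕ, ℂ) 0) - (((A^M) w : ∀ _ : ℕ, ℂ) 0)) := by
        rw [lp.coeFn_smul]
        simp [lp.coeFn_sub]
        rfl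
      rw [hcoord]
      ring

end JacobiBM

open JacobiBM in
set_option maxHeartbeats 2000000 in
/-- Local Borg–Marchenko for Jacobi matrices: if the `m`-functions of two bounded
self-adjoint Jacobi matrices satisfy `|m₁(z) − m₂(z)| = O(|z|^{−N})` for some even
`N ≥ 4`, then the entries agree for `0 ≤ k ≤ (N−4)/2`. -/
theorem jacobi_m_function_local_uniqueness
    (a₁ a₂ b₁ b₂ : ℕ → ℝ)
    (ha₁ : ∀ k, 0 < a₁ k) (ha₂ : ∀ k, 0 < a₂ k)
    (A₁ A₂ : lp (fun _ : ℕ => ℂ) 2 →L[ℂ] lp (fun _ : ℕ => ℂ) 2)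
    (hsa₁ : IsSelfAdjoint A₁) (hsa₂ : IsSelfAdjoint A₂)
    (hA₁ : ∀ (u : lp (fun _ : ℕ => ℂ) 2) (k : ℕ),
      (A₁ u : ∀ _ : ℕ, ℂ) k = (if k = 0 then 0 else (a₁ (k-1) : ℂ) * (u : ∀ _ : ℕ, ℂ) (k-1))
        + (b₁ k : ℂ) * (u : ∀ _ : ℕ, ℂ) k + (a₁ k : ℂ) * (u : ∀ _ : ℕ, ℂ) (k+1))
    (hA₂ : ∀ (u : lp (fun _ : ℕ => ℂ) 2) (k : ℕ),
      (A₂ u : ∀ _ : ℕ, ℂ) k = (if k = 0 then 0 else (a₂ (k-1) : ℂ) * (u : ∀ _ : ℕ, ℂ) (k-1))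
        + (b₂ k : ℂ) * (u : ∀ _ : ℕ, ℂ) k + (a₂ k : ℂ) * (u : ∀ _ : ℕ, ℂ) (k+1))
    (δ₀ : lp (fun _ : ℕ => ℂ) 2) (hδ₀ : δ₀ = lp.single 2 0 1)
    (m₁ m₂ : ℂ → ℂ)
    (hm₁ : ∀ z : ℂ, z.im ≠ 0 → ∃ R : lp (fun _ : ℕ => ℂ) 2 →L[ℂ] lp (fun _ : ℕ => ℂ) 2,
      (A₁ - z • 1) * R = 1 ∧ R * (A₁ - z • 1) = 1 ∧
        m₁ z = inner (𝕜 := ℂ) δ₀ (R δ₀))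
    (hm₂ : ∀ z : ℂ, z.im ≠ 0 → ∃ R : lp (fun _ : ℕ => ℂ) 2 →L[ℂ] lp (fun _ : ℕ => ℂ) 2,
      (A₂ - z • 1) * R = 1 ∧ R * (A₂ - z • 1) = 1 ∧
        m₂ z = inner (𝕜 := ℂ) δ₀ (R δ₀))
    (N : ℕ) (hN : 4 ≤ N) (hNeven : Even N)
    (hO : ∃ C > (0:ℝ), ∃ R₀ : ℝ, ∀ z : ℂ, z.im ≠ 0 → ‖z‖ ≥ R₀ →
      ‖m₁ z - m₂ z‖ ≤ C * ‖z‖ ^ (-(N:ℝ))) :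
    ∀ k : ℕ, 2 * k + 4 ≤ N → a₁ k = a₂ k ∧ b₁ k = b₂ k := by
  classical
  obtain ⟨C, hC, R₀, hOb⟩ := hO
  have hδc : ∀ k, (δ₀ : ∀ _ : ℕ, ℂ) k = if k = 0 then 1 else 0 := by
    intro k
    rw [hδ₀]
    by_cases h : k = 0
    · subst h; simp [lp.single_apply_self]
    · simp [lp.single_apply_ne (E := fun _ : ℕ => ℂ) 2 0 1 h, h]
  have hδn : ‖δ₀‖ = 1 := by
    rw [hδ₀]
    have := lp.norm_single (E := fun _ : ℕ => ℂ) (p := 2) (by norm_num) 0 (1:ℂ)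
    simpa using this
  -- coordinates of powers applied to δ₀
  have hcoordgen : ∀ (A : lp (fun _ : ℕ => ℂ) 2 →L[ℂ] lp (fun _ : ℕ => ℂ) 2) (a b : ℕ → ℝ),
      (∀ (u : lp (fun _ : ℕ => ℂ) 2) (k : ℕ),
        (A u : ∀ _ : ℕ, ℂ) k = (if k = 0 then 0 else (a (k-1) : ℂ) * (u : ∀ _ : ℕ, ℂ) (k-1))
          + (b k : ℂ) * (u : ∀ _ : ℕ, ℂ) k + (a k : ℂ) * (u : ∀ _ : ℕ, ℂ) (k+1)) →
      ∀ n k, ((A ^ n) δ₀ : ∀ _ : ℕ, ℂ) k = ((q a b n k : ℝ) : ℂ) := by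
    intro A a b hA n
    induction n with
    | zero =>
        intro k
        rw [pow_zero, ContinuousLinearMap.one_apply, hδc k]
        by_cases h : k = 0 <;> simp [q, h]
    | succ n ih =>
        intro k
        rw [pow_succ', ContinuousLinearMap.mul_apply, hA _ k, ih (k-1), ih k, ih (k+1)]
        show _ = ((J a b (q a b n) k : ℝ) : ℂ)
        simp only [J, Complex.ofReal_add, Complex.ofReal_mul,
          apply_ite (fun x : ℝ => (x : ℂ)), Complex.ofReal_zero]
  have hinner : ∀ w : lp (fun _ : ℕ => ℂ) 2,
      inner (𝕜 := ℂ) δ₀ w = (w : ∀ _ : ℕ, ℂ) 0 := by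
    intro w
    rw [hδ₀, lp.inner_single_left]
    simp
  -- the moments agree up to order N - 2
  have key : ∀ n, n + 2 ≤ N → q a₁ b₁ n 0 = q a₂ b₂ n 0 := by
    intro n
    induction n using Nat.strong_induction_on with
    | _ n ih =>
      intro hn
      have hsmall : ∀ ε : ℝ, 0 < ε →
          ‖((q a₁ b₁ n 0 : ℝ) : ℂ) - ((q a₂ b₂ n 0 : ℝ) : ℂ)‖ ≤ ε := by
        intro ε hε
        set M := n + 1 with hM
        set t : ℝ := max (max R₀ 1) (max (3*C/ε)
          (max (‖A₁‖ + 1 + 3*‖A₁‖^M/ε) (‖A₂‖ + 1 + 3*‖A₂‖^M/ε))) with htdef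
        have ht1 : (1:ℝ) ≤ t := le_trans (le_max_right R₀ 1) (le_max_left _ _)
        have ht0 : (0:ℝ) < t := by linarith
        have htR₀ : R₀ ≤ t := le_trans (le_max_left R₀ 1) (le_max_left _ _)
        have htC : 3*C/ε ≤ t := le_trans (le_max_left _ _) (le_max_right _ _)
        have htA₁ : ‖A₁‖ + 1 + 3*‖A₁‖^M/ε ≤ t :=
          le_trans (le_trans (le_max_left _ _) (le_max_right _ _)) (le_max_right _ _)
        have htA₂ : ‖A₂‖ + 1 + 3*‖A₂‖^M/ε ≤ t :=
          le_trans (le_trans (le_max_right _ _) (le_max_right _ _)) (le_max_right _ _)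
        set z : ℂ := (t : ℂ) * Complex.I with hzdef
        have hzim : z.im ≠ 0 := by
          have h : z.im = t := by simp [hzdef]
          rw [h]; linarith
        have hznorm : ‖z‖ = t := by
          rw [hzdef, norm_mul, Complex.norm_I, mul_one, Complex.norm_real]
          exact abs_of_pos ht0
        have hzne : z ≠ 0 := by
          intro h
          rw [h, norm_zero] at hznorm
          linarith
        obtain ⟨S₁, hS₁, _, hm₁z⟩ := hm₁ z hzim
        obtain ⟨S₂, hS₂, _, hm₂z⟩ := hm₂ z hzim
        have e₁ : m₁ z
            = (∑ n' ∈ Finset.range M, -(z⁻¹^(n'+1)) * ((q a₁ b₁ n' 0 : ℝ) : ℂ))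
              + z⁻¹^M * (((A₁^M) (S₁ δ₀) : ∀ _ : ℕ, ℂ) 0) := by
          rw [hm₁z, hinner, expand_coord A₁ S₁ z hzne hS₁ δ₀ M]
          congr 1
          exact Finset.sum_congr rfl fun n' _ => by rw [hcoordgen A₁ a₁ b₁ hA₁ n' 0]
        have e₂ : m₂ z
            = (∑ n' ∈ Finset.range M, -(z⁻¹^(n'+1)) * ((q a₂ b₂ n' 0 : ℝ) : ℂ))
              + z⁻¹^M * (((A₂^M) (S₂ δ₀) : ∀ _ : ℕ, ℂ) 0) := by
          rw [hm₂z, hinner, expand_coord A₂ S₂ z hzne hS₂ δ₀ M]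
          congr 1
          exact Finset.sum_congr rfl fun n' _ => by rw [hcoordgen A₂ a₂ b₂ hA₂ n' 0]
        set d : ℂ := ((q a₁ b₁ n 0 : ℝ) : ℂ) - ((q a₂ b₂ n 0 : ℝ) : ℂ) with hd
        set c₁ : ℂ := ((A₁^M) (S₁ δ₀) : ∀ _ : ℕ, ℂ) 0 with hc₁
        set c₂ : ℂ := ((A₂^M) (S₂ δ₀) : ∀ _ : ℕ, ℂ) 0 with hc₂
        have hsumdiff : m₁ z - m₂ z = -(z⁻¹^M) * d + z⁻¹^M * (c₁ - c₂) := by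
          rw [e₁, e₂]
          have hss : (∑ n' ∈ Finset.range M, -(z⁻¹^(n'+1)) * ((q a₁ b₁ n' 0 : ℝ) : ℂ))
              - (∑ n' ∈ Finset.range M, -(z⁻¹^(n'+1)) * ((q a₂ b₂ n' 0 : ℝ) : ℂ))
              = -(z⁻¹^M) * d := by
            rw [← Finset.sum_sub_distrib, hM, Finset.sum_range_succ]
            have hzero : ∑ n' ∈ Finset.range n, (-(z⁻¹^(n'+1)) * ((q a₁ b₁ n' 0 : ℝ) : ℂ)
                - -(z⁻¹^(n'+1)) * ((q a₂ b₂ n' 0 : ℝ) : ℂ)) = 0 := by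
              refine Finset.sum_eq_zero fun n' hn' => ?_
              have hlt : n' < n := Finset.mem_range.mp hn'
              rw [ih n' hlt (by omega)]
              ring
            rw [hzero, hd]
            ring
          rw [← hss]
          ring
        have hzinv : z^M * z⁻¹^M = 1 := by
          rw [← mul_pow, mul_inv_cancel₀ hzne, one_pow]
        have hdval : d = -(z^M) * (m₁ z - m₂ z) + (c₁ - c₂) := by
          have h := congrArg (fun x => z^M * x) hsumdiff
          calc d = z^M * z⁻¹^M * d := by rw [hzinv, one_mul]
            _ = -(z^M) * (m₁ z - m₂ z) + z^M * z⁻¹^M * (c₁ - c₂) := by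
                rw [hsumdiff]; ring
            _ = -(z^M) * (m₁ z - m₂ z) + (c₁ - c₂) := by rw [hzinv, one_mul]
        have hnd : ‖d‖ ≤ t^M * ‖m₁ z - m₂ z‖ + (‖c₁‖ + ‖c₂‖) := by
          rw [hdval]
          refine (norm_add_le _ _).trans ?_
          have h1 : ‖-(z^M) * (m₁ z - m₂ z)‖ = t^M * ‖m₁ z - m₂ z‖ := by
            rw [norm_mul, norm_neg, norm_pow, hznorm]
          have h2 : ‖c₁ - c₂‖ ≤ ‖c₁‖ + ‖c₂‖ := norm_sub_le _ _
          rw [h1]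
          linarith
        -- bound the m-function difference term
        have hterm1 : t^M * ‖m₁ z - m₂ z‖ ≤ ε/3 := by
          have hb := hOb z hzim (by rw [hznorm]; exact htR₀)
          rw [hznorm] at hb
          have hrw : t ^ (-(N:ℝ)) = (t^N)⁻¹ := by
            rw [Real.rpow_neg (le_of_lt ht0), Real.rpow_natCast]
          rw [hrw] at hb
          have htN : (0:ℝ) < t^N := by positivity
          have hstep : t^M * ‖m₁ z - m₂ z‖ ≤ t^M * (C * (t^N)⁻¹) :=
            mul_le_mul_of_nonneg_left hb (by positivity)
          have hpow : t^(M+1) ≤ t^N := pow_le_pow_right₀ ht1 (by omega)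
          have h2 : t^M * (C * (t^N)⁻¹) ≤ C / t := by
            have hx : t^M / t^N ≤ 1 / t := by
              rw [div_le_div_iff₀ htN ht0]
              have he : t^M * t = t^(M+1) := by ring
              rw [he, one_mul]
              exact hpow
            calc t^M * (C * (t^N)⁻¹) = C * (t^M / t^N) := by ring
              _ ≤ C * (1/t) := mul_le_mul_of_nonneg_left hx (le_of_lt hC)
              _ = C / t := by ring
          have h3 : C / t ≤ ε/3 := by
            rw [div_le_div_iff₀ ht0 (by norm_num : (0:ℝ) < 3)]
            have h4 := mul_le_mul_of_nonneg_left htC (le_of_lt hε)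
            have h5 : ε * (3*C/ε) = 3*C := by field_simp
            rw [h5] at h4
            linarith
          linarith
        -- bound the remainder terms
        have hcb : ∀ (A S : lp (fun _ : ℕ => ℂ) 2 →L[ℂ] lp (fun _ : ℕ => ℂ) 2),
            (A - z • 1) * S = 1 → ‖A‖ + 1 + 3*‖A‖^M/ε ≤ t →
            ‖((A^M) (S δ₀) : ∀ _ : ℕ, ℂ) 0‖ ≤ ε/3 := by
          intro A S hS htA
          have h0 : ‖((A^M) (S δ₀) : ∀ _ : ℕ, ℂ) 0‖ ≤ ‖(A^M) (S δ₀)‖ :=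
            lp.norm_apply_le_norm (p := 2) (E := fun _ : ℕ => ℂ) (by norm_num) ((A^M) (S δ₀)) 0
          have h1 : ‖(A^M) (S δ₀)‖ ≤ ‖A‖^M * ‖S δ₀‖ := pow_apply_norm A (S δ₀) M
          have h2 : ‖S δ₀‖ ≤ ‖S‖ := by
            have := S.le_opNorm δ₀
            rw [hδn, mul_one] at this
            exact this
          have h3 : ‖z‖ * ‖S‖ ≤ ‖A‖ * ‖S‖ + 1 := res_norm A S z hS
          rw [hznorm] at h3
          have hx0 : (0:ℝ) ≤ ‖A‖ := norm_nonneg A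
          have hs0 : (0:ℝ) ≤ ‖S‖ := norm_nonneg S
          have hxM : (0:ℝ) ≤ ‖A‖^M := by positivity
          have hdiv : (0:ℝ) ≤ 3*‖A‖^M/ε := by positivity
          have htx : 0 < t - ‖A‖ := by linarith
          have hp3 : 3*‖A‖^M ≤ ε*(t - ‖A‖) := by
            have h6 : 3*‖A‖^M/ε ≤ t - ‖A‖ - 1 := by linarith
            rw [div_le_iff₀ hε] at h6
            nlinarith
          have h7 : ‖A‖^M * ‖S‖ ≤ ε/3 := by
            nlinarith [mul_le_mul_of_nonneg_left h3 hxM]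
          calc ‖((A^M) (S δ₀) : ∀ _ : ℕ, ℂ) 0‖ ≤ ‖(A^M) (S δ₀)‖ := h0
            _ ≤ ‖A‖^M * ‖S δ₀‖ := h1
            _ ≤ ‖A‖^M * ‖S‖ := mul_le_mul_of_nonneg_left h2 hxM
            _ ≤ ε/3 := h7
        have hb1 : ‖c₁‖ ≤ ε/3 := hcb A₁ S₁ hS₁ htA₁
        have hb2 : ‖c₂‖ ≤ ε/3 := hcb A₂ S₂ hS₂ htA₂
        calc ‖d‖ ≤ t^M * ‖m₁ z - m₂ z‖ + (‖c₁‖ + ‖c₂‖) := hnd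
          _ ≤ ε/3 + (ε/3 + ε/3) := by
              refine add_le_add hterm1 (add_le_add hb1 hb2)
          _ = ε := by ring
      have hdz : ((q a₁ b₁ n 0 : ℝ) : ℂ) - ((q a₂ b₂ n 0 : ℝ) : ℂ) = 0 := by
        by_contra hne
        have hpos : 0 < ‖((q a₁ b₁ n 0 : ℝ) : ℂ) - ((q a₂ b₂ n 0 : ℝ) : ℂ)‖ :=
          norm_pos_iff.mpr hne
        have := hsmall (‖((q a₁ b₁ n 0 : ℝ) : ℂ) - ((q a₂ b₂ n 0 : ℝ) : ℂ)‖/2) (by linarith)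
        linarith
      have h := sub_eq_zero.mp hdz
      exact_mod_cast h
  intro k hk
  exact extract a₁ b₁ a₂ b₂ ha₁ ha₂ k (fun n hn => key n (by omega)) k le_rfl
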